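/- arXiv:1904.04303 — 6 statements merged into one kernel-verified Lean document; each statement's English description precedes it below -/
import Mathlib

section
/- Let σ > 0, τ > 0 and σ₀ ∈ (0, σ), and set δ₀ = ((σ - σ₀)/τ)². Let V : [0, ∞) → ℝ be differentiable with V(t) ≥ 0 and V'(t) ≤ -σ V(t) + τ V(t)^{3/2} for all t ≥ 0. If V(0) < δ₀, then τ V(t)^{3/2} ≤ (σ - σ₀) V(t) and hence V'(t) ≤ -σ₀ V(t) hold for all t ≥ 0, and consequently V(t) ≤ V(0) e^{-σ₀ t} for all t ≥ 0. -/
/-- Lemma 2 of the paper: comparison-principle estimate for a Lyapunov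
functional satisfying `V' ≤ -σ V + τ V^(3/2)`.  With `δ₀ = ((σ - σ₀)/τ)²`
and `V 0 < δ₀`, the cubic term is dominated, `V' ≤ -σ₀ V`, and hence
`V t ≤ V 0 * exp (-σ₀ t)` for all `t ≥ 0`. -/
theorem lyapunov_comparison_decay
    (σ τ σ₀ : ℝ) (hσ : 0 < σ) (hτ : 0 < τ) (hσ₀ : 0 < σ₀) (hσ₀σ : σ₀ < σ)
    (δ₀ : ℝ) (hδ₀ : δ₀ = ((σ - σ₀) / τ) ^ 2)
    (V : ℝ → ℝ)
    (hVdiff : ∀ t, 0 ≤ t → DifferentiableAt ℝ V t)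
    (hVnonneg : ∀ t, 0 ≤ t → 0 ≤ V t)
    (hVineq : ∀ t, 0 ≤ t → deriv V t ≤ -σ * V t + τ * (V t) ^ ((3 : ℝ) / 2))
    (hV0 : V 0 < δ₀) :
    (∀ t, 0 ≤ t → τ * (V t) ^ ((3 : ℝ) / 2) ≤ (σ - σ₀) * V t ∧
      deriv V t ≤ -σ₀ * V t) ∧
    (∀ t, 0 ≤ t → V t ≤ V 0 * Real.exp (-σ₀ * t)) := by
  have hσσ₀ : 0 < σ - σ₀ := by linarith
  -- domination of the cubic term when V t < δ₀
  have dom : ∀ t, 0 ≤ t → V t < δ₀ →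
      τ * (V t) ^ ((3 : ℝ) / 2) ≤ (σ - σ₀) * V t := by
    intro t ht hlt
    rcases eq_or_lt_of_le (hVnonneg t ht) with h0 | hpos
    · rw [← h0, Real.zero_rpow (by norm_num)]
      simp
    · have hsq : Real.sqrt (V t) < (σ - σ₀) / τ := by
        rw [hδ₀] at hlt
        have h1 := Real.sqrt_lt_sqrt (le_of_lt hpos) hlt
        rwa [Real.sqrt_sq (by positivity)] at h1
      have hpow : (V t) ^ ((3 : ℝ) / 2) = V t * Real.sqrt (V t) := by
        rw [show ((3 : ℝ) / 2) = 1 + 1 / 2 by norm_num,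
          Real.rpow_add hpos, Real.rpow_one, ← Real.sqrt_eq_rpow]
      rw [hpow]
      have hτc : τ * ((σ - σ₀) / τ) = σ - σ₀ := by field_simp
      have h2 : (τ * V t) * Real.sqrt (V t) ≤ (τ * V t) * ((σ - σ₀) / τ) :=
        mul_le_mul_of_nonneg_left hsq.le (by positivity)
      nlinarith [h2, hpos]
  -- derivative bound when V t < δ₀
  have dstep : ∀ t, 0 ≤ t → V t < δ₀ → deriv V t ≤ -σ₀ * V t := by
    intro t ht hlt
    have h1 := hVineq t ht
    have h2 := dom t ht hlt
    linarith
  have hcont : ∀ t, 0 ≤ t → ContinuousAt V t := fun t ht =>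
    (hVdiff t ht).continuousAt
  -- key invariance: V stays below δ₀
  have key : ∀ t, 0 ≤ t → V t < δ₀ := by
    by_contra h
    push_neg at h
    obtain ⟨t₁, ht₁, hVt₁⟩ := h
    set S : Set ℝ := {t | 0 ≤ t ∧ δ₀ ≤ V t} with hS
    have hSne : S.Nonempty := ⟨t₁, ht₁, hVt₁⟩
    have hSbdd : BddBelow S := ⟨0, fun x hx => hx.1⟩
    set t₀ := sInf S with ht₀def
    have ht₀0 : 0 ≤ t₀ := le_csInf hSne fun x hx => hx.1
    have ht₀cl : t₀ ∈ closure S := csInf_mem_closure hSne hSbdd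
    have hVt₀ : δ₀ ≤ V t₀ := by
      obtain ⟨u, hu, hlim⟩ := mem_closure_iff_seq_limit.1 ht₀cl
      have htend : Filter.Tendsto (fun n => V (u n)) Filter.atTop
          (nhds (V t₀)) := (hcont t₀ ht₀0).tendsto.comp hlim
      exact ge_of_tendsto htend (Filter.Eventually.of_forall fun n => (hu n).2)
    have hlt : ∀ s, 0 ≤ s → s < t₀ → V s < δ₀ := by
      intro s hs hst
      by_contra hge
      push_neg at hge
      exact absurd (csInf_le hSbdd ⟨hs, hge⟩) (not_le.2 hst)
    have hant : AntitoneOn V (Set.Icc 0 t₀) := by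
      apply antitoneOn_of_deriv_nonpos (convex_Icc 0 t₀)
      · exact fun x hx => (hcont x hx.1).continuousWithinAt
      · intro x hx
        rw [interior_Icc] at hx
        exact (hVdiff x hx.1.le).differentiableWithinAt
      · intro x hx
        rw [interior_Icc] at hx
        have := dstep x hx.1.le (hlt x hx.1.le hx.2)
        nlinarith [hVnonneg x hx.1.le]
    have : V t₀ ≤ V 0 :=
      hant ⟨le_refl 0, ht₀0⟩ ⟨ht₀0, le_refl t₀⟩ ht₀0
    linarith
  refine ⟨fun t ht => ⟨dom t ht (key t ht), dstep t ht (key t ht)⟩, ?_⟩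
  intro t ht
  -- consider g s = V s * exp (σ₀ s)
  set g : ℝ → ℝ := fun s => V s * Real.exp (σ₀ * s) with hg
  have hgderiv : ∀ s, 0 ≤ s →
      HasDerivAt g (deriv V s * Real.exp (σ₀ * s)
        + V s * (Real.exp (σ₀ * s) * σ₀)) s := by
    intro s hs
    have he : HasDerivAt (fun x => Real.exp (σ₀ * x))
        (Real.exp (σ₀ * s) * σ₀) s :=
      (Real.hasDerivAt_exp (σ₀ * s)).comp s
        (by simpa using (hasDerivAt_id s).const_mul σ₀)
    exact ((hVdiff s hs).hasDerivAt).mul he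
  have hgant : AntitoneOn g (Set.Icc 0 t) := by
    apply antitoneOn_of_deriv_nonpos (convex_Icc 0 t)
    · intro x hx
      exact ((hgderiv x hx.1).differentiableAt.continuousAt).continuousWithinAt
    · intro x hx
      rw [interior_Icc] at hx
      exact (hgderiv x hx.1.le).differentiableAt.differentiableWithinAt
    · intro x hx
      rw [interior_Icc] at hx
      rw [(hgderiv x hx.1.le).deriv]
      have hd := dstep x hx.1.le (key x hx.1.le)
      have he : 0 < Real.exp (σ₀ * x) := Real.exp_pos _
      nlinarith [hVnonneg x hx.1.le]
  have hgt : g t ≤ g 0 := hgant ⟨le_refl 0, ht⟩ ⟨ht, le_refl t⟩ ht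
  have hg0 : g 0 = V 0 := by simp [hg]
  have hgt' : V t * Real.exp (σ₀ * t) ≤ V 0 := by
    rw [← hg0]; exact hgt
  rw [show -σ₀ * t = -(σ₀ * t) by ring, Real.exp_neg, ← div_eq_mul_inv,
    le_div_iff₀ (Real.exp_pos _)]
  exact hgt'
end

section
/- Let L > 0 and l* ∈ (0, L), and set δ₁ = min{(L - l*)², (l*)²}. Let l : [0, ∞) → ℝ be continuous with 0 < l(0) < L, and let V : [0, ∞) → ℝ be continuous and nonnegative with (l(t) - l*)² ≤ V(t) for all t ≥ 0 and V(0) < δ₁. Assume that for every t* ≥ 0, if 0 < l(s) < L for all s ∈ [0, t*), then V(t*) ≤ V(0). Then 0 < l(t) < L for all t ≥ 0. -/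
/-- Lemma 3 of the paper (contradiction argument): the model-validity
condition `0 < l t < L` persists for all time, given that the Lyapunov
functional `V` bounds the squared interface deviation `(l t - l*)²`,
satisfies `V t* ≤ V 0` as long as the interface has remained inside the
segment, and starts below `δ₁ = min ((L - l*)², (l*)²)`. -/
theorem interface_stays_in_segment
    (L lstar : ℝ) (hL : 0 < L) (hlstar : 0 < lstar) (hlstarL : lstar < L)
    (δ₁ : ℝ) (hδ₁ : δ₁ = min ((L - lstar) ^ 2) (lstar ^ 2))
    (l : ℝ → ℝ) (hlcont : Continuous l)
    (hl0 : 0 < l 0 ∧ l 0 < L)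
    (V : ℝ → ℝ) (hVcont : Continuous V)
    (hVnonneg : ∀ t, 0 ≤ t → 0 ≤ V t)
    (hVbound : ∀ t, 0 ≤ t → (l t - lstar) ^ 2 ≤ V t)
    (hV0 : V 0 < δ₁)
    (hVdecay : ∀ tstar, 0 ≤ tstar →
      (∀ s, 0 ≤ s → s < tstar → 0 < l s ∧ l s < L) → V tstar ≤ V 0) :
    ∀ t, 0 ≤ t → 0 < l t ∧ l t < L := by
  by_contra h
  push_neg at h
  obtain ⟨t₁, ht₁, hbad⟩ := h
  -- the bad set
  set B : Set ℝ := {t | 0 ≤ t ∧ (l t ≤ 0 ∨ L ≤ l t)} with hB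
  have hBne : B.Nonempty := by
    refine ⟨t₁, ht₁, ?_⟩
    rcases le_or_gt (l t₁) 0 with h | h
    · exact Or.inl h
    · exact Or.inr (hbad h)
  have hBbdd : BddBelow B := ⟨0, fun x hx => hx.1⟩
  have hBclosed : IsClosed B := by
    have : B = Set.Ici (0:ℝ) ∩ (l ⁻¹' Set.Iic 0 ∪ l ⁻¹' Set.Ici L) := by
      ext x
      simp [hB, Set.mem_Ici, Set.mem_Iic, and_comm]
    rw [this]
    exact isClosed_Ici.inter ((isClosed_Iic.preimage hlcont).union
      (isClosed_Ici.preimage hlcont))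
  set t₀ := sInf B with ht₀
  have ht₀mem : t₀ ∈ B := hBclosed.csInf_mem hBne hBbdd
  have ht₀0 : 0 ≤ t₀ := ht₀mem.1
  have hinside : ∀ s, 0 ≤ s → s < t₀ → 0 < l s ∧ l s < L := by
    intro s hs hst
    by_contra hc
    push_neg at hc
    have hsB : s ∈ B := by
      refine ⟨hs, ?_⟩
      by_contra hc2
      push_neg at hc2
      exact (hc hc2.1).not_gt hc2.2
    exact absurd (csInf_le hBbdd hsB) (not_le.mpr hst)
  have hVt₀ : V t₀ ≤ V 0 := hVdecay t₀ ht₀0 hinside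
  have hbd : (l t₀ - lstar) ^ 2 < δ₁ := lt_of_le_of_lt
    (le_trans (hVbound t₀ ht₀0) hVt₀) hV0
  rw [hδ₁] at hbd
  have h1 : (l t₀ - lstar) ^ 2 < (L - lstar) ^ 2 := lt_of_lt_of_le hbd (min_le_left _ _)
  have h2 : (l t₀ - lstar) ^ 2 < lstar ^ 2 := lt_of_lt_of_le hbd (min_le_right _ _)
  rcases ht₀mem.2 with hle | hge
  · nlinarith
  · nlinarith
end

section
/- Let u, b, K_f, K_c > 0, L > 0, l* ∈ ℝ, and let l : ℝ → ℝ be differentiable with 0 < l(t) < L/2 for all t; set X(t) = l(t) - l*. Let ρ̃_f, ρ̃_c : ℝ × ℝ → ℝ be continuously differentiable with ∂_t ρ̃_f = -u ∂_x ρ̃_f and ∂_t ρ̃_c = u ∂_x ρ̃_c everywhere, and suppose l'(t) = -b(ρ̃_f(l(t),t) + ρ̃_c(l(t),t)) for all t. Define w_f(x,t) = ρ̃_f(x,t) - K_f ( X(t) - (b/u)∫_x^{l(t)} ρ̃_f(ξ,t) dξ - (b/u)∫_{l(t)}^{2l(t)-x} ρ̃_c(ξ,t) dξ ). Then for all t and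 all x ∈ (0, l(t)): ∂_t w_f(x,t) + u ∂_x w_f(x,t) = (K_f b / u) l'(t) ( ρ̃_f(l(t),t) - ρ̃_c(l(t),t) + 2 ρ̃_c(2l(t)-x, t) ). -/
/-- Target PDE for the free-regime backstepping variable in the case
`l(t) ∈ (0, L/2)`: the transformed state `w_f` satisfies
`∂_t w_f + u ∂_x w_f = (K_f b/u) l̇(t) (ρ̃_f(l,t) - ρ̃_c(l,t) + 2ρ̃_c(2l-x,t))`
for `x ∈ (0, l(t))`. -/
theorem target_pde_free_regime
    (u b Kf Kc L lstar : ℝ)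
    (hu : 0 < u) (hb : 0 < b) (hKf : 0 < Kf) (hKc : 0 < Kc) (hL : 0 < L)
    (l : ℝ → ℝ) (hl : Differentiable ℝ l)
    (hlrange : ∀ t, 0 < l t ∧ l t < L / 2)
    (X : ℝ → ℝ) (hX : ∀ t, X t = l t - lstar)
    (ρf ρc : ℝ × ℝ → ℝ) (hρf : ContDiff ℝ 1 ρf) (hρc : ContDiff ℝ 1 ρc)
    (hpdef : ∀ x t : ℝ,
      fderiv ℝ ρf (x, t) ((0 : ℝ), (1 : ℝ)) =
        -u * fderiv ℝ ρf (x, t) ((1 : ℝ), (0 : ℝ)))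
    (hpdec : ∀ x t : ℝ,
      fderiv ℝ ρc (x, t) ((0 : ℝ), (1 : ℝ)) =
        u * fderiv ℝ ρc (x, t) ((1 : ℝ), (0 : ℝ)))
    (hode : ∀ t, deriv l t = -b * (ρf (l t, t) + ρc (l t, t)))
    (wf : ℝ × ℝ → ℝ)
    (hwf : ∀ x t : ℝ, wf (x, t) =
      ρf (x, t) - Kf * (X t
        - (b / u) * (∫ ξ in x..(l t), ρf (ξ, t))
        - (b / u) * (∫ ξ in (l t)..(2 * l t - x), ρc (ξ, t)))) :
    ∀ t : ℝ, ∀ x ∈ Set.Ioo (0 : ℝ) (l t),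
      fderiv ℝ wf (x, t) ((0 : ℝ), (1 : ℝ)) +
        u * fderiv ℝ wf (x, t) ((1 : ℝ), (0 : ℝ)) =
      (Kf * b / u) * deriv l t *
        (ρf (l t, t) - ρc (l t, t) + 2 * ρc (2 * l t - x, t)) := by
  have hρfd : Differentiable ℝ ρf := hρf.differentiable one_ne_zero
  have hρcd : Differentiable ℝ ρc := hρc.differentiable one_ne_zero
  -- representation along characteristics
  have repf : ∀ x t : ℝ, ρf (x, t) = ρf (x - u * t, 0) := by
    intro x t
    have key : ∀ τ : ℝ, HasDerivAt (fun τ => ρf (x - u * t + u * τ, τ)) 0 τ := by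
      intro τ
      have hγ : HasDerivAt (fun τ : ℝ => ((x - u * t + u * τ, τ) : ℝ × ℝ)) ((u, 1) : ℝ × ℝ) τ := by
        have h1 : HasDerivAt (fun τ : ℝ => x - u * t + u * τ) u τ := by
          simpa using ((hasDerivAt_id τ).const_mul u).const_add (x - u * t)
        exact HasDerivAt.prodMk h1 (hasDerivAt_id τ)
      have hD := (hρfd (x - u * t + u * τ, τ)).hasFDerivAt
      have hc := hD.comp_hasDerivAt_of_eq τ hγ rfl
      have hval : fderiv ℝ ρf (x - u * t + u * τ, τ) ((u, 1) : ℝ × ℝ) = 0 := by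
        have h2 : ((u, 1) : ℝ × ℝ) = u • ((1 : ℝ), (0 : ℝ)) + ((0 : ℝ), (1 : ℝ)) := by
          simp [Prod.ext_iff]
        rw [h2, map_add, map_smul, hpdef]
        simp [smul_eq_mul]
      rw [hval] at hc
      exact hc
    have hconst := is_const_of_deriv_eq_zero
      (f := fun τ => ρf (x - u * t + u * τ, τ))
      (fun τ => (key τ).differentiableAt) (fun τ => (key τ).deriv) t 0
    simpa using hconst
  have repc : ∀ x t : ℝ, ρc (x, t) = ρc (x + u * t, 0) := by
    intro x t
    have key : ∀ τ : ℝ, HasDerivAt (fun τ => ρc (x + u * t - u * τ, τ)) 0 τ := by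
      intro τ
      have hγ : HasDerivAt (fun τ : ℝ => ((x + u * t - u * τ, τ) : ℝ × ℝ)) ((-u, 1) : ℝ × ℝ) τ := by
        have h1 : HasDerivAt (fun τ : ℝ => x + u * t - u * τ) (-u) τ := by
          simpa using (((hasDerivAt_id τ).const_mul u).const_sub (x + u * t))
        exact HasDerivAt.prodMk h1 (hasDerivAt_id τ)
      have hD := (hρcd (x + u * t - u * τ, τ)).hasFDerivAt
      have hc := hD.comp_hasDerivAt_of_eq τ hγ rfl
      have hval : fderiv ℝ ρc (x + u * t - u * τ, τ) ((-u, 1) : ℝ × ℝ) = 0 := by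
        have h2 : ((-u, 1) : ℝ × ℝ) = (-u) • ((1 : ℝ), (0 : ℝ)) + ((0 : ℝ), (1 : ℝ)) := by
          simp [Prod.ext_iff]
        rw [h2, map_add, map_smul, hpdec]
        simp [smul_eq_mul]
      rw [hval] at hc
      exact hc
    have hconst := is_const_of_deriv_eq_zero
      (f := fun τ => ρc (x + u * t - u * τ, τ))
      (fun τ => (key τ).differentiableAt) (fun τ => (key τ).deriv) t 0
    simpa using hconst
  -- 1d profiles and antiderivatives
  set ff : ℝ → ℝ := fun s => ρf (s, 0) with hffdef
  set gg : ℝ → ℝ := fun s => ρc (s, 0) with hggdef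
  have hffc : Continuous ff := hρf.continuous.comp (continuous_id.prodMk continuous_const)
  have hggc : Continuous gg := hρc.continuous.comp (continuous_id.prodMk continuous_const)
  set F : ℝ → ℝ := fun y => ∫ s in (0:ℝ)..y, ff s with hFdef
  set G : ℝ → ℝ := fun y => ∫ s in (0:ℝ)..y, gg s with hGdef
  have hF : ∀ y, HasDerivAt F (ff y) y := fun y => (hffc.integral_hasStrictDerivAt 0 y).hasDerivAt
  have hG : ∀ y, HasDerivAt G (gg y) y := fun y => (hggc.integral_hasStrictDerivAt 0 y).hasDerivAt
  have hFsub : ∀ p q : ℝ, F q - F p = ∫ s in p..q, ff s := fun p q =>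
    intervalIntegral.integral_interval_sub_left (hffc.intervalIntegrable 0 q)
      (hffc.intervalIntegrable 0 p)
  have hGsub : ∀ p q : ℝ, G q - G p = ∫ s in p..q, gg s := fun p q =>
    intervalIntegral.integral_interval_sub_left (hggc.intervalIntegrable 0 q)
      (hggc.intervalIntegrable 0 p)
  have hIf : ∀ x t : ℝ, (∫ ξ in x..(l t), ρf (ξ, t)) = F (l t - u * t) - F (x - u * t) := by
    intro x t
    rw [hFsub]
    rw [← intervalIntegral.integral_comp_sub_right ff (u * t)]
    exact intervalIntegral.integral_congr fun ξ _ => repf ξ t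
  have hIc : ∀ x t : ℝ,
      (∫ ξ in (l t)..(2 * l t - x), ρc (ξ, t)) = G (2 * l t - x + u * t) - G (l t + u * t) := by
    intro x t
    rw [hGsub]
    rw [← intervalIntegral.integral_comp_add_right gg (u * t)]
    exact intervalIntegral.integral_congr fun ξ _ => repc ξ t
  -- rewrite wf
  have hwf' : wf = fun p : ℝ × ℝ =>
      ρf p - Kf * ((l p.2 - lstar)
        - (b / u) * (F (l p.2 - u * p.2) - F (p.1 - u * p.2))
        - (b / u) * (G (2 * l p.2 - p.1 + u * p.2) - G (l p.2 + u * p.2))) := by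
    funext p
    obtain ⟨x, t⟩ := p
    rw [hwf x t, hX, hIf, hIc]
  intro t x hx
  -- derivative of each building block at (x, t)
  set Q : ℝ × ℝ →L[ℝ] ℝ := ContinuousLinearMap.snd ℝ ℝ ℝ with hQdef
  set P : ℝ × ℝ →L[ℝ] ℝ := ContinuousLinearMap.fst ℝ ℝ ℝ with hPdef
  have hlp : HasFDerivAt (fun p : ℝ × ℝ => l p.2) (deriv l t • Q) (x, t) :=
    (hl t).hasDerivAt.comp_hasFDerivAt (x, t) hasFDerivAt_snd
  have hut : HasFDerivAt (fun p : ℝ × ℝ => u * p.2) (u • Q) (x, t) :=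
    hasFDerivAt_snd.const_mul u
  have hσa : HasFDerivAt (fun p : ℝ × ℝ => p.1 - u * p.2) (P - u • Q) (x, t) :=
    hasFDerivAt_fst.sub hut
  have hσc : HasFDerivAt (fun p : ℝ × ℝ => l p.2 - u * p.2) (deriv l t • Q - u • Q) (x, t) :=
    hlp.sub hut
  have hσd : HasFDerivAt (fun p : ℝ × ℝ => 2 * l p.2 - p.1 + u * p.2)
      ((2 : ℝ) • (deriv l t • Q) - P + u • Q) (x, t) :=
    ((hlp.const_mul 2).sub hasFDerivAt_fst).add hut
  have hσe : HasFDerivAt (fun p : ℝ × ℝ => l p.2 + u * p.2) (deriv l t • Q + u • Q) (x, t) :=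
    hlp.add hut
  have hσX : HasFDerivAt (fun p : ℝ × ℝ => l p.2 - lstar) (deriv l t • Q) (x, t) :=
    hlp.sub_const lstar
  have hFc : HasFDerivAt (fun p : ℝ × ℝ => F (l p.2 - u * p.2))
      (ff (l t - u * t) • (deriv l t • Q - u • Q)) (x, t) :=
    HasDerivAt.comp_hasFDerivAt (h₂ := F) (x, t) (hF (l t - u * t)) hσc
  have hFa : HasFDerivAt (fun p : ℝ × ℝ => F (p.1 - u * p.2))
      (ff (x - u * t) • (P - u • Q)) (x, t) :=
    HasDerivAt.comp_hasFDerivAt (h₂ := F) (x, t) (hF (x - u * t)) hσa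
  have hGd : HasFDerivAt (fun p : ℝ × ℝ => G (2 * l p.2 - p.1 + u * p.2))
      (gg (2 * l t - x + u * t) • ((2 : ℝ) • (deriv l t • Q) - P + u • Q)) (x, t) :=
    HasDerivAt.comp_hasFDerivAt (h₂ := G) (x, t) (hG (2 * l t - x + u * t)) hσd
  have hGe : HasFDerivAt (fun p : ℝ × ℝ => G (l p.2 + u * p.2))
      (gg (l t + u * t) • (deriv l t • Q + u • Q)) (x, t) :=
    HasDerivAt.comp_hasFDerivAt (h₂ := G) (x, t) (hG (l t + u * t)) hσe
  have hW : HasFDerivAt (fun p : ℝ × ℝ =>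
      ρf p - Kf * ((l p.2 - lstar)
        - (b / u) * (F (l p.2 - u * p.2) - F (p.1 - u * p.2))
        - (b / u) * (G (2 * l p.2 - p.1 + u * p.2) - G (l p.2 + u * p.2))))
      (fderiv ℝ ρf (x, t) -
        Kf • ((deriv l t • Q
          - (b / u) • (ff (l t - u * t) • (deriv l t • Q - u • Q) - ff (x - u * t) • (P - u • Q)))
          - (b / u) • (gg (2 * l t - x + u * t) • ((2 : ℝ) • (deriv l t • Q) - P + u • Q)
              - gg (l t + u * t) • (deriv l t • Q + u • Q)))) (x, t) :=
    (hρfd (x, t)).hasFDerivAt.sub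
      (((hσX.sub ((hFc.sub hFa).const_mul (b / u))).sub
        ((hGd.sub hGe).const_mul (b / u))).const_mul Kf)
  have hfd : fderiv ℝ wf (x, t) =
      fderiv ℝ ρf (x, t) -
        Kf • ((deriv l t • Q
          - (b / u) • (ff (l t - u * t) • (deriv l t • Q - u • Q) - ff (x - u * t) • (P - u • Q)))
          - (b / u) • (gg (2 * l t - x + u * t) • ((2 : ℝ) • (deriv l t • Q) - P + u • Q)
              - gg (l t + u * t) • (deriv l t • Q + u • Q))) := by
    rw [hwf']
    exact hW.fderiv
  -- values of the profiles
  have hffl : ff (l t - u * t) = ρf (l t, t) := (repf (l t) t).symm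
  have hffx : ff (x - u * t) = ρf (x, t) := (repf x t).symm
  have hggd : gg (2 * l t - x + u * t) = ρc (2 * l t - x, t) := (repc (2 * l t - x) t).symm
  have hggl : gg (l t + u * t) = ρc (l t, t) := (repc (l t) t).symm
  rw [hfd]
  simp only [ContinuousLinearMap.coe_sub', Pi.sub_apply, ContinuousLinearMap.coe_smul',
    Pi.smul_apply, ContinuousLinearMap.coe_add', Pi.add_apply, hQdef, hPdef,
    ContinuousLinearMap.coe_fst', ContinuousLinearMap.coe_snd', smul_eq_mul]
  rw [hffl, hffx, hggd, hggl, hpdef x t, hode t]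
  have hune : u ≠ 0 := ne_of_gt hu
  field_simp
  ring
end

section
/- Let u, b, K_f, K_c > 0, L > 0, l* ∈ ℝ, and let l : ℝ → ℝ be differentiable with L/2 < l(t) < L for all t; set X(t) = l(t) - l*. Let ρ̃_f, ρ̃_c : ℝ × ℝ → ℝ be continuously differentiable with ∂_t ρ̃_f = -u ∂_x ρ̃_f and ∂_t ρ̃_c = u ∂_x ρ̃_c everywhere, and suppose l'(t) = -b(ρ̃_f(l(t),t) + ρ̃_c(l(t),t)) for all t. Define w_c(x,t) = ρ̃_c(x,t) - K_c ( X(t) - (b/u)∫_{l(t)}^{x} ρ̃_c(ξ,t) dξ - (b/u)∫_{2l(t)-x}^{l(t)} ρ̃_f(ξ,t) dξ ). Then for all t and all x ∈ (l(t), L): ∂_t w_c(x,t) - u ∂_x w_c(x,t) = (K_c b / u) l'(t) ( ρ̃_f(l(t),t) - ρ̃_c(l(t),t) - 2 ρ̃_f(2l(t)-x, t) ). -/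
open ContinuousLinearMap intervalIntegral


/-- Target PDE for the congested-regime backstepping variable in the case
`l(t) ∈ (L/2, L)`: the transformed state `w_c` satisfies
`∂_t w_c - u ∂_x w_c = (K_c b/u) l̇(t) (ρ̃_f(l,t) - ρ̃_c(l,t) - 2ρ̃_f(2l-x,t))`
for `x ∈ (l(t), L)`. -/
theorem target_pde_congested_regime
    (u b Kf Kc L lstar : ℝ)
    (hu : 0 < u) (hb : 0 < b) (hKf : 0 < Kf) (hKc : 0 < Kc) (hL : 0 < L)
    (l : ℝ → ℝ) (hl : Differentiable ℝ l)
    (hlrange : ∀ t, L / 2 < l t ∧ l t < L)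
    (X : ℝ → ℝ) (hX : ∀ t, X t = l t - lstar)
    (ρf ρc : ℝ × ℝ → ℝ) (hρf : ContDiff ℝ 1 ρf) (hρc : ContDiff ℝ 1 ρc)
    (hpdef : ∀ x t : ℝ,
      fderiv ℝ ρf (x, t) ((0 : ℝ), (1 : ℝ)) =
        -u * fderiv ℝ ρf (x, t) ((1 : ℝ), (0 : ℝ)))
    (hpdec : ∀ x t : ℝ,
      fderiv ℝ ρc (x, t) ((0 : ℝ), (1 : ℝ)) =
        u * fderiv ℝ ρc (x, t) ((1 : ℝ), (0 : ℝ)))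
    (hode : ∀ t, deriv l t = -b * (ρf (l t, t) + ρc (l t, t)))
    (wc : ℝ × ℝ → ℝ)
    (hwc : ∀ x t : ℝ, wc (x, t) =
      ρc (x, t) - Kc * (X t
        - (b / u) * (∫ ξ in (l t)..x, ρc (ξ, t))
        - (b / u) * (∫ ξ in (2 * l t - x)..(l t), ρf (ξ, t)))) :
    ∀ t : ℝ, ∀ x ∈ Set.Ioo (l t) L,
      fderiv ℝ wc (x, t) ((0 : ℝ), (1 : ℝ)) -
        u * fderiv ℝ wc (x, t) ((1 : ℝ), (0 : ℝ)) =
      (Kc * b / u) * deriv l t *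
        (ρf (l t, t) - ρc (l t, t) - 2 * ρf (2 * l t - x, t)) := by
  have huz : u ≠ 0 := ne_of_gt hu
  have hρcd : Differentiable ℝ ρc := hρc.differentiable one_ne_zero
  have hρfd : Differentiable ℝ ρf := hρf.differentiable one_ne_zero
  set ψc : ℝ → ℝ := fun y => ρc (y, 0) with hψc_def
  set ψf : ℝ → ℝ := fun y => ρf (y, 0) with hψf_def
  have hψcd : Differentiable ℝ ψc :=
    hρcd.comp (differentiable_id.prodMk (differentiable_const 0))
  have hψfd : Differentiable ℝ ψf :=
    hρfd.comp (differentiable_id.prodMk (differentiable_const 0))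
  have hψcc : Continuous ψc := hψcd.continuous
  have hψfc : Continuous ψf := hψfd.continuous
  -- characteristics
  have hchar_c : ∀ x t : ℝ, ρc (x, t) = ψc (x + u * t) := by
    intro x t
    have hder : ∀ s : ℝ, HasDerivAt (fun s : ℝ => ρc (x + u * s, t - s)) 0 s := by
      intro s
      have hγ : HasDerivAt (fun s : ℝ => ((x + u * s, t - s) : ℝ × ℝ))
          ((u, -1) : ℝ × ℝ) s := by
        have h1 : HasDerivAt (fun s : ℝ => x + u * s) u s := by
          simpa using ((hasDerivAt_id s).const_mul u).const_add x
        have h2 : HasDerivAt (fun s : ℝ => t - s) (-1) s := by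
          simpa using (hasDerivAt_id s).const_sub t
        exact h1.prodMk h2
      have hcomp := ((hρcd (x + u * s, t - s)).hasFDerivAt).comp_hasDerivAt s hγ
      have hval : fderiv ℝ ρc (x + u * s, t - s) ((u, -1) : ℝ × ℝ) = 0 := by
        have h1 : ((u, -1) : ℝ × ℝ)
            = u • ((1 : ℝ), (0 : ℝ)) + (-1 : ℝ) • ((0 : ℝ), (1 : ℝ)) := by
          simp [Prod.ext_iff]
        rw [h1, map_add, map_smul, map_smul, hpdec (x + u * s) (t - s)]
        simp [smul_eq_mul]
      rw [hval] at hcomp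
      exact hcomp
    have hconst := is_const_of_deriv_eq_zero
      (fun s => (hder s).differentiableAt) (fun s => (hder s).deriv) 0 t
    simpa using hconst
  have hchar_f : ∀ x t : ℝ, ρf (x, t) = ψf (x - u * t) := by
    intro x t
    have hder : ∀ s : ℝ, HasDerivAt (fun s : ℝ => ρf (x - u * s, t - s)) 0 s := by
      intro s
      have hγ : HasDerivAt (fun s : ℝ => ((x - u * s, t - s) : ℝ × ℝ))
          ((-u, -1) : ℝ × ℝ) s := by
        have h1 : HasDerivAt (fun s : ℝ => x - u * s) (-u) s := by
          simpa using ((hasDerivAt_id s).const_mul u).const_sub x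
        have h2 : HasDerivAt (fun s : ℝ => t - s) (-1) s := by
          simpa using (hasDerivAt_id s).const_sub t
        exact h1.prodMk h2
      have hcomp := ((hρfd (x - u * s, t - s)).hasFDerivAt).comp_hasDerivAt s hγ
      have hval : fderiv ℝ ρf (x - u * s, t - s) ((-u, -1) : ℝ × ℝ) = 0 := by
        have h1 : ((-u, -1) : ℝ × ℝ)
            = (-u) • ((1 : ℝ), (0 : ℝ)) + (-1 : ℝ) • ((0 : ℝ), (1 : ℝ)) := by
          simp [Prod.ext_iff]
        rw [h1, map_add, map_smul, map_smul, hpdef (x - u * s) (t - s)]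
        simp [smul_eq_mul]
      rw [hval] at hcomp
      exact hcomp
    have hconst := is_const_of_deriv_eq_zero
      (fun s => (hder s).differentiableAt) (fun s => (hder s).deriv) 0 t
    simpa using hconst
  -- antiderivatives
  set Ψc : ℝ → ℝ := fun y => ∫ s in (0:ℝ)..y, ψc s with hΨc_def
  set Ψf : ℝ → ℝ := fun y => ∫ s in (0:ℝ)..y, ψf s with hΨf_def
  have hΨcd : ∀ y, HasDerivAt Ψc (ψc y) y := fun y =>
    integral_hasDerivAt_right (hψcc.intervalIntegrable 0 y)
      (hψcc.aestronglyMeasurable.stronglyMeasurableAtFilter) hψcc.continuousAt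
  have hΨfd : ∀ y, HasDerivAt Ψf (ψf y) y := fun y =>
    integral_hasDerivAt_right (hψfc.intervalIntegrable 0 y)
      (hψfc.aestronglyMeasurable.stronglyMeasurableAtFilter) hψfc.continuousAt
  have hΨc_sub : ∀ a b : ℝ, (∫ s in a..b, ψc s) = Ψc b - Ψc a := fun a b =>
    (integral_interval_sub_left (hψcc.intervalIntegrable 0 b)
      (hψcc.intervalIntegrable 0 a)).symm
  have hΨf_sub : ∀ a b : ℝ, (∫ s in a..b, ψf s) = Ψf b - Ψf a := fun a b =>
    (integral_interval_sub_left (hψfc.intervalIntegrable 0 b)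
      (hψfc.intervalIntegrable 0 a)).symm
  -- rewrite the integrals
  have hIc : ∀ x t : ℝ,
      (∫ ξ in (l t)..x, ρc (ξ, t)) = Ψc (x + u * t) - Ψc (l t + u * t) := by
    intro x t
    have h1 : (∫ ξ in (l t)..x, ρc (ξ, t)) = ∫ ξ in (l t)..x, ψc (ξ + u * t) :=
      intervalIntegral.integral_congr fun ξ _ => hchar_c ξ t
    rw [h1, intervalIntegral.integral_comp_add_right ψc (u * t), hΨc_sub]
  have hIf : ∀ x t : ℝ,
      (∫ ξ in (2 * l t - x)..(l t), ρf (ξ, t))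
        = Ψf (l t - u * t) - Ψf (2 * l t - x - u * t) := by
    intro x t
    have h1 : (∫ ξ in (2 * l t - x)..(l t), ρf (ξ, t))
        = ∫ ξ in (2 * l t - x)..(l t), ψf (ξ - u * t) :=
      intervalIntegral.integral_congr fun ξ _ => hchar_f ξ t
    rw [h1, intervalIntegral.integral_comp_sub_right ψf (u * t), hΨf_sub]
  -- closed form of wc
  have hwc' : wc = fun p : ℝ × ℝ =>
      ψc (p.1 + u * p.2) - Kc * ((l p.2 - lstar)
        - (b / u) * (Ψc (p.1 + u * p.2) - Ψc (l p.2 + u * p.2))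
        - (b / u) * (Ψf (l p.2 - u * p.2) - Ψf (2 * l p.2 - p.1 - u * p.2))) := by
    funext p
    obtain ⟨x, t⟩ := p
    rw [hwc x t, hX, hIc, hIf, hchar_c x t]
  intro t x hx
  -- joint derivative
  set l' := deriv l t with hl'_def
  have hlt : HasDerivAt l l' t := (hl t).hasDerivAt
  have hfst : HasFDerivAt (fun p : ℝ × ℝ => p.1)
      (ContinuousLinearMap.fst ℝ ℝ ℝ) (x, t) := hasFDerivAt_fst
  have hsnd : HasFDerivAt (fun p : ℝ × ℝ => p.2)
      (ContinuousLinearMap.snd ℝ ℝ ℝ) (x, t) := hasFDerivAt_snd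
  have hA : HasFDerivAt (fun p : ℝ × ℝ => p.1 + u * p.2)
      (ContinuousLinearMap.fst ℝ ℝ ℝ + u • ContinuousLinearMap.snd ℝ ℝ ℝ) (x, t) :=
    hfst.add (hsnd.const_mul u)
  have hlc : HasFDerivAt (fun p : ℝ × ℝ => l p.2)
      (l' • ContinuousLinearMap.snd ℝ ℝ ℝ) (x, t) :=
    hlt.comp_hasFDerivAt (x, t) hsnd
  have hB : HasFDerivAt (fun p : ℝ × ℝ => l p.2 + u * p.2)
      (l' • ContinuousLinearMap.snd ℝ ℝ ℝ + u • ContinuousLinearMap.snd ℝ ℝ ℝ) (x, t) :=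
    hlc.add (hsnd.const_mul u)
  have hC : HasFDerivAt (fun p : ℝ × ℝ => l p.2 - u * p.2)
      (l' • ContinuousLinearMap.snd ℝ ℝ ℝ - u • ContinuousLinearMap.snd ℝ ℝ ℝ) (x, t) :=
    hlc.sub (hsnd.const_mul u)
  have hD : HasFDerivAt (fun p : ℝ × ℝ => 2 * l p.2 - p.1 - u * p.2)
      ((2 : ℝ) • (l' • ContinuousLinearMap.snd ℝ ℝ ℝ) - ContinuousLinearMap.fst ℝ ℝ ℝ
        - u • ContinuousLinearMap.snd ℝ ℝ ℝ) (x, t) :=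
    ((hlc.const_mul 2).sub hfst).sub (hsnd.const_mul u)
  have hψcA : HasFDerivAt (fun p : ℝ × ℝ => ψc (p.1 + u * p.2))
      (deriv ψc (x + u * t) •
        (ContinuousLinearMap.fst ℝ ℝ ℝ + u • ContinuousLinearMap.snd ℝ ℝ ℝ)) (x, t) :=
    ((hψcd _).hasDerivAt).comp_hasFDerivAt (x, t) hA
  have hΨcA : HasFDerivAt (fun p : ℝ × ℝ => Ψc (p.1 + u * p.2))
      (ψc (x + u * t) •
        (ContinuousLinearMap.fst ℝ ℝ ℝ + u • ContinuousLinearMap.snd ℝ ℝ ℝ)) (x, t) :=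
    (hΨcd _).comp_hasFDerivAt (x, t) hA
  have hΨcB : HasFDerivAt (fun p : ℝ × ℝ => Ψc (l p.2 + u * p.2))
      (ψc (l t + u * t) •
        (l' • ContinuousLinearMap.snd ℝ ℝ ℝ + u • ContinuousLinearMap.snd ℝ ℝ ℝ)) (x, t) :=
    (hΨcd _).comp_hasFDerivAt (x, t) hB
  have hΨfC : HasFDerivAt (fun p : ℝ × ℝ => Ψf (l p.2 - u * p.2))
      (ψf (l t - u * t) •
        (l' • ContinuousLinearMap.snd ℝ ℝ ℝ - u • ContinuousLinearMap.snd ℝ ℝ ℝ)) (x, t) :=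
    (hΨfd _).comp_hasFDerivAt (x, t) hC
  have hΨfD : HasFDerivAt (fun p : ℝ × ℝ => Ψf (2 * l p.2 - p.1 - u * p.2))
      (ψf (2 * l t - x - u * t) •
        ((2 : ℝ) • (l' • ContinuousLinearMap.snd ℝ ℝ ℝ) - ContinuousLinearMap.fst ℝ ℝ ℝ
          - u • ContinuousLinearMap.snd ℝ ℝ ℝ)) (x, t) :=
    (hΨfd _).comp_hasFDerivAt (x, t) hD
  have hbig : HasFDerivAt wc
      (deriv ψc (x + u * t) •
          (ContinuousLinearMap.fst ℝ ℝ ℝ + u • ContinuousLinearMap.snd ℝ ℝ ℝ)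
        - Kc • ((l' • ContinuousLinearMap.snd ℝ ℝ ℝ)
          - (b / u) • (ψc (x + u * t) •
              (ContinuousLinearMap.fst ℝ ℝ ℝ + u • ContinuousLinearMap.snd ℝ ℝ ℝ)
            - ψc (l t + u * t) •
              (l' • ContinuousLinearMap.snd ℝ ℝ ℝ + u • ContinuousLinearMap.snd ℝ ℝ ℝ))
          - (b / u) • (ψf (l t - u * t) •
              (l' • ContinuousLinearMap.snd ℝ ℝ ℝ - u • ContinuousLinearMap.snd ℝ ℝ ℝ)
            - ψf (2 * l t - x - u * t) •
              ((2 : ℝ) • (l' • ContinuousLinearMap.snd ℝ ℝ ℝ)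
                - ContinuousLinearMap.fst ℝ ℝ ℝ
                - u • ContinuousLinearMap.snd ℝ ℝ ℝ)))) (x, t) := by
    rw [hwc']
    exact hψcA.sub ((((hlc.sub_const lstar).sub
      ((hΨcA.sub hΨcB).const_mul (b / u))).sub
      ((hΨfC.sub hΨfD).const_mul (b / u))).const_mul Kc)
  rw [hbig.fderiv]
  have hode' : l' = -b * (ψf (l t - u * t) + ψc (l t + u * t)) := by
    rw [hl'_def, hode t, hchar_f (l t) t, hchar_c (l t) t]
  rw [hchar_f (l t) t, hchar_c (l t) t, hchar_f (2 * l t - x) t]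
  simp only [ContinuousLinearMap.sub_apply, ContinuousLinearMap.add_apply,
    ContinuousLinearMap.smul_apply, ContinuousLinearMap.coe_fst',
    ContinuousLinearMap.coe_snd', smul_eq_mul]
  rw [hode']
  field_simp
  ring
end

section
/- Let u > 0, let l : ℝ → ℝ be differentiable with l(t) > 0 for all t, and let w, F : ℝ × ℝ → ℝ with w continuously differentiable and satisfying ∂_t w(x,t) + u ∂_x w(x,t) = F(x,t) for all (x,t). Then for every t, d/dt ∫_0^{l(t)} e^{-x} w(x,t)² dx = -u ∫_0^{l(t)} e^{-x} w(x,t)² dx - (u - l'(t)) e^{-l(t)} w(l(t),t)² + u w(0,t)² + 2 ∫_0^{l(t)} e^{-x} w(x,t) F(x,t) dx. -/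
open MeasureTheory intervalIntegral Real Filter

private lemma pd_snd (g : ℝ × ℝ → ℝ) (hg : ContDiff ℝ 1 g) (x t : ℝ) :
    HasDerivAt (fun s => g (x, s)) (fderiv ℝ g (x, t) (0, 1)) t :=
  (hg.differentiable one_ne_zero (x, t)).hasFDerivAt.comp_hasDerivAt t
    ((hasDerivAt_const t x).prodMk (hasDerivAt_id t))

private lemma pd_fst (g : ℝ × ℝ → ℝ) (hg : ContDiff ℝ 1 g) (x t : ℝ) :
    HasDerivAt (fun y => g (y, t)) (fderiv ℝ g (x, t) (1, 0)) x :=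
  (hg.differentiable one_ne_zero (x, t)).hasFDerivAt.comp_hasDerivAt x
    ((hasDerivAt_id x).prodMk (hasDerivAt_const x t))

private lemma cont_pd (g : ℝ × ℝ → ℝ) (hg : ContDiff ℝ 1 g) (v : ℝ × ℝ) :
    Continuous fun p => fderiv ℝ g p v :=
  (hg.continuous_fderiv one_ne_zero).clm_apply continuous_const

private lemma param_deriv (g : ℝ × ℝ → ℝ) (hg : ContDiff ℝ 1 g) (a t₀ : ℝ) :
    HasDerivAt (fun s => ∫ x in (0:ℝ)..a, g (x, s))
      (∫ x in (0:ℝ)..a, fderiv ℝ g (x, t₀) (0, 1)) t₀ := by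
  have hcont : Continuous fun p : ℝ × ℝ => fderiv ℝ g (p.1, p.2) (0, 1) := by
    simpa using cont_pd g hg (0, 1)
  obtain ⟨C, hC⟩ := ((isCompact_uIcc (a := (0:ℝ)) (b := a)).prod
      (isCompact_closedBall t₀ 1)).exists_bound_of_continuousOn hcont.continuousOn
  refine (intervalIntegral.hasDerivAt_integral_of_dominated_loc_of_deriv_le
    (F := fun s x => g (x, s)) (F' := fun s x => fderiv ℝ g (x, s) (0, 1))
    (bound := fun _ => C) (s := Metric.ball t₀ 1) (Metric.ball_mem_nhds t₀ one_pos) ?_ ?_ ?_ ?_ ?_ ?_).2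
  · exact Eventually.of_forall fun s =>
      (hg.continuous.comp (continuous_id.prodMk continuous_const)).aestronglyMeasurable
  · exact (hg.continuous.comp (continuous_id.prodMk continuous_const)).intervalIntegrable _ _
  · exact ((cont_pd g hg (0,1)).comp (continuous_id.prodMk continuous_const)).aestronglyMeasurable
  · refine ae_of_all _ fun x hx s hs => ?_
    exact hC (x, s) ⟨Set.uIoc_subset_uIcc hx, Metric.ball_subset_closedBall hs⟩
  · exact intervalIntegrable_const
  · exact ae_of_all _ fun x _ s _ => pd_snd g hg x s

private lemma psi_hasFDerivAt (g : ℝ × ℝ → ℝ) (hg : Continuous g) (a₀ t₀ : ℝ) :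
    HasFDerivAt (fun p : ℝ × ℝ => ∫ x in a₀..p.1, g (x, p.2))
      (g (a₀, t₀) • ContinuousLinearMap.fst ℝ ℝ ℝ) (a₀, t₀) := by
  rw [hasFDerivAt_iff_isLittleO_nhds_zero]
  rw [Asymptotics.isLittleO_iff]
  intro c hc
  obtain ⟨δ, hδ, hδ'⟩ := Metric.continuousAt_iff.1 hg.continuousAt c hc
  filter_upwards [Metric.ball_mem_nhds (0 : ℝ × ℝ) hδ] with h hh
  have hnorm : ‖h‖ < δ := by simpa using hh
  have h1 : |h.1| ≤ ‖h‖ := norm_fst_le h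
  have h2 : |h.2| ≤ ‖h‖ := norm_snd_le h
  have key : ∀ x ∈ Set.uIoc a₀ (a₀ + h.1),
      ‖g (x, t₀ + h.2) - g (a₀, t₀)‖ ≤ c := by
    intro x hx
    have hx1 : |x - a₀| ≤ |h.1| := by
      rcases hx with ⟨hmin, hmax⟩
      have hma : max a₀ (a₀ + h.1) ≤ a₀ + |h.1| :=
        max_le (by linarith [abs_nonneg h.1]) (by linarith [le_abs_self h.1])
      have hmi : a₀ - |h.1| ≤ min a₀ (a₀ + h.1) :=
        le_min (by linarith [abs_nonneg h.1]) (by linarith [neg_abs_le h.1])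
      rw [abs_le]; constructor <;> linarith
    have : dist (x, t₀ + h.2) (a₀, t₀) < δ := by
      rw [Prod.dist_eq]
      refine max_lt ?_ ?_
      · simp only [Real.dist_eq]
        calc |x - a₀| ≤ |h.1| := hx1
          _ ≤ ‖h‖ := h1
          _ < δ := hnorm
      · simp only [Real.dist_eq]
        calc |t₀ + h.2 - t₀| = |h.2| := by ring_nf
          _ ≤ ‖h‖ := h2
          _ < δ := hnorm
    have := hδ' this
    rw [Real.dist_eq] at this
    exact le_of_lt this
  have hint : ∀ s : ℝ, Continuous fun x => g (x, s) :=
    fun s => hg.comp (continuous_id.prodMk continuous_const)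
  have heq : (fun p : ℝ × ℝ => ∫ x in a₀..p.1, g (x, p.2)) ((a₀, t₀) + h)
      - (fun p : ℝ × ℝ => ∫ x in a₀..p.1, g (x, p.2)) (a₀, t₀)
      - (g (a₀, t₀) • ContinuousLinearMap.fst ℝ ℝ ℝ) h
      = ∫ x in a₀..(a₀ + h.1), (g (x, t₀ + h.2) - g (a₀, t₀)) := by
    rw [intervalIntegral.integral_sub ((hint _).intervalIntegrable _ _) intervalIntegrable_const]
    simp [intervalIntegral.integral_const, smul_eq_mul]
    ring
  rw [heq]
  calc ‖∫ x in a₀..(a₀ + h.1), (g (x, t₀ + h.2) - g (a₀, t₀))‖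
      ≤ c * |a₀ + h.1 - a₀| := intervalIntegral.norm_integral_le_of_norm_le_const key
    _ = c * |h.1| := by ring_nf
    _ ≤ c * ‖h‖ := by nlinarith

private lemma moving_deriv (g : ℝ × ℝ → ℝ) (hg : ContDiff ℝ 1 g)
    (l : ℝ → ℝ) (hl : Differentiable ℝ l) (t : ℝ) :
    HasDerivAt (fun s => ∫ x in (0:ℝ)..(l s), g (x, s))
      (deriv l t * g (l t, t) + ∫ x in (0:ℝ)..(l t), fderiv ℝ g (x, t) (0, 1)) t := by
  have hcurve : HasDerivAt (fun s => (l s, s)) (deriv l t, 1) t :=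
    ((hl t).hasDerivAt).prodMk (hasDerivAt_id t)
  have hΨ : HasDerivAt (fun s => ∫ x in (l t)..(l s), g (x, s))
      (g (l t, t) * deriv l t) t := by
    have h2 := HasFDerivAt.comp_hasDerivAt_of_eq t
      (psi_hasFDerivAt g hg.continuous (l t) t) hcurve rfl
    simp only [Function.comp_def, ContinuousLinearMap.smul_apply,
      ContinuousLinearMap.coe_fst', smul_eq_mul] at h2
    exact h2
  have hΦ : HasDerivAt (fun s => ∫ x in (0:ℝ)..(l t), g (x, s))
      (∫ x in (0:ℝ)..(l t), fderiv ℝ g (x, t) (0, 1)) t := param_deriv g hg (l t) t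
  have hsum := hΦ.add hΨ
  have heq : (fun s => (∫ x in (0:ℝ)..(l t), g (x, s)) + ∫ x in (l t)..(l s), g (x, s))
      = fun s => ∫ x in (0:ℝ)..(l s), g (x, s) := by
    funext s
    exact intervalIntegral.integral_add_adjacent_intervals
      ((hg.continuous.comp (continuous_id.prodMk continuous_const)).intervalIntegrable _ _)
      ((hg.continuous.comp (continuous_id.prodMk continuous_const)).intervalIntegrable _ _)
  rw [show ((fun s => ∫ x in (0:ℝ)..(l t), g (x, s)) + fun s => ∫ x in (l t)..(l s), g (x, s)) = fun s => ∫ x in (0:ℝ)..(l s), g (x, s) from heq] at hsum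
  refine hsum.congr_deriv ?_
  ring

/-- Leibniz rule plus integration by parts for the exponentially weighted
energy on the moving domain `[0, l(t)]` of a solution of the rightward
forced transport equation `∂_t w + u ∂_x w = F`. -/
theorem weighted_energy_derivative_moving_upper_limit
    (u : ℝ) (hu : 0 < u)
    (l : ℝ → ℝ) (hl : Differentiable ℝ l) (hlpos : ∀ t, 0 < l t)
    (w F : ℝ × ℝ → ℝ) (hw : ContDiff ℝ 1 w)
    (hpde : ∀ x t : ℝ,
      fderiv ℝ w (x, t) ((0 : ℝ), (1 : ℝ)) +
        u * fderiv ℝ w (x, t) ((1 : ℝ), (0 : ℝ)) = F (x, t)) :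
    ∀ t : ℝ,
      HasDerivAt (fun s => ∫ x in (0 : ℝ)..(l s), Real.exp (-x) * (w (x, s)) ^ 2)
        (-u * (∫ x in (0 : ℝ)..(l t), Real.exp (-x) * (w (x, t)) ^ 2)
          - (u - deriv l t) * Real.exp (-(l t)) * (w (l t, t)) ^ 2
          + u * (w (0, t)) ^ 2
          + 2 * ∫ x in (0 : ℝ)..(l t), Real.exp (-x) * w (x, t) * F (x, t)) t := by
  intro t
  have hg : ContDiff ℝ 1 (fun p : ℝ × ℝ => Real.exp (-p.1) * w p ^ 2) :=
    ((Real.contDiff_exp.of_le le_top).comp contDiff_fst.neg).mul (hw.pow 2)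
  -- continuity facts (as functions of x for fixed t)
  have cw : Continuous fun x => w (x, t) :=
    hw.continuous.comp (continuous_id.prodMk continuous_const)
  have cwx : Continuous fun x => fderiv ℝ w (x, t) (1, 0) :=
    (cont_pd w hw (1, 0)).comp (continuous_id.prodMk continuous_const)
  have cwt : Continuous fun x => fderiv ℝ w (x, t) (0, 1) :=
    (cont_pd w hw (0, 1)).comp (continuous_id.prodMk continuous_const)
  have cF : Continuous fun x => F (x, t) := by
    have hFe : (fun x => F (x, t))
        = fun x => fderiv ℝ w (x, t) (0, 1) + u * fderiv ℝ w (x, t) (1, 0) :=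
      funext fun x => (hpde x t).symm
    rw [hFe]
    exact cwt.add (continuous_const.mul cwx)
  -- the partial t derivative of the integrand
  have hgd : ∀ x : ℝ, fderiv ℝ (fun p : ℝ × ℝ => Real.exp (-p.1) * w p ^ 2) (x, t) (0, 1)
      = Real.exp (-x) * (2 * w (x, t) * fderiv ℝ w (x, t) (0, 1)) := by
    intro x
    have hA := pd_snd _ hg x t
    have hB : HasDerivAt (fun s => Real.exp (-x) * w (x, s) ^ 2)
        (Real.exp (-x) * ((2 : ℕ) * w (x, t) ^ (2 - 1) * fderiv ℝ w (x, t) (0, 1))) t :=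
      ((pd_snd w hw x t).pow 2).const_mul _
    have huniq := hA.unique hB
    rw [huniq]; norm_num
  -- derivative of x ↦ exp(-x) w(x,t)^2 (for integration by parts)
  have hD : ∀ x : ℝ, HasDerivAt (fun y => Real.exp (-y) * w (y, t) ^ 2)
      (-Real.exp (-x) * w (x, t) ^ 2
        + Real.exp (-x) * (2 * w (x, t) * fderiv ℝ w (x, t) (1, 0))) x := by
    intro x
    have hexp : HasDerivAt (fun y : ℝ => Real.exp (-y)) (-Real.exp (-x)) x := by
      have h := (Real.hasDerivAt_exp (-x)).comp x (hasDerivAt_neg x); simp only [mul_neg, mul_one] at h; exact h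
    have := hexp.mul ((pd_fst w hw x t).fun_pow 2)
    refine this.congr_deriv ?_
    push_cast
    ring
  have hDcont : Continuous fun x => -Real.exp (-x) * w (x, t) ^ 2
      + Real.exp (-x) * (2 * w (x, t) * fderiv ℝ w (x, t) (1, 0)) :=
    ((Real.continuous_exp.comp continuous_neg).neg.mul (cw.pow 2)).add
      ((Real.continuous_exp.comp continuous_neg).mul ((continuous_const.mul cw).mul cwx))
  have hFTC : (∫ x in (0:ℝ)..(l t), (-Real.exp (-x) * w (x, t) ^ 2
        + Real.exp (-x) * (2 * w (x, t) * fderiv ℝ w (x, t) (1, 0))))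
      = Real.exp (-(l t)) * w (l t, t) ^ 2 - Real.exp (-(0:ℝ)) * w ((0:ℝ), t) ^ 2 :=
    intervalIntegral.integral_eq_sub_of_hasDerivAt (fun x _ => hD x)
      (hDcont.intervalIntegrable _ _)
  -- pointwise identity for the integrand of the t-derivative
  have hinteq : (fun x => fderiv ℝ (fun p : ℝ × ℝ => Real.exp (-p.1) * w p ^ 2) (x, t) (0, 1))
      = fun x => 2 * (Real.exp (-x) * w (x, t) * F (x, t))
        - u * (Real.exp (-x) * w (x, t) ^ 2)
        - u * (-Real.exp (-x) * w (x, t) ^ 2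
            + Real.exp (-x) * (2 * w (x, t) * fderiv ℝ w (x, t) (1, 0))) := by
    funext x
    rw [hgd x, ← hpde x t]
    ring
  -- integrabilities
  have i1 : IntervalIntegrable (fun x => 2 * (Real.exp (-x) * w (x, t) * F (x, t)))
      volume 0 (l t) :=
    (continuous_const.mul (((Real.continuous_exp.comp continuous_neg).mul cw).mul cF)).intervalIntegrable _ _
  have i2 : IntervalIntegrable (fun x => u * (Real.exp (-x) * w (x, t) ^ 2))
      volume 0 (l t) :=
    (continuous_const.mul ((Real.continuous_exp.comp continuous_neg).mul (cw.pow 2))).intervalIntegrable _ _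
  have i3 : IntervalIntegrable (fun x => u * (-Real.exp (-x) * w (x, t) ^ 2
      + Real.exp (-x) * (2 * w (x, t) * fderiv ℝ w (x, t) (1, 0)))) volume 0 (l t) :=
    (continuous_const.mul hDcont).intervalIntegrable _ _
  have hmain := moving_deriv _ hg l hl t
  rw [hinteq] at hmain
  rw [intervalIntegral.integral_sub (i1.sub i2) i3,
      intervalIntegral.integral_sub i1 i2,
      intervalIntegral.integral_const_mul, intervalIntegral.integral_const_mul,
      intervalIntegral.integral_const_mul, hFTC] at hmain
  have hgoalfun : (fun s => ∫ x in (0:ℝ)..(l s), Real.exp (-x) * w (x, s) ^ 2)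
      = fun s => ∫ x in (0:ℝ)..(l s),
          (fun p : ℝ × ℝ => Real.exp (-p.1) * w p ^ 2) (x, s) := rfl
  rw [hgoalfun]
  convert hmain using 1
  simp only [Real.exp_zero, neg_zero]
  ring
end

section
/- Let u > 0, L ∈ ℝ, let l : ℝ → ℝ be differentiable with l(t) < L for all t, and let w, F : ℝ × ℝ → ℝ with w continuously differentiable and satisfying ∂_t w(x,t) - u ∂_x w(x,t) = F(x,t) for all (x,t). Then for every t, d/dt ∫_{l(t)}^{L} e^{x-L} w(x,t)² dx = -u ∫_{l(t)}^{L} e^{x-L} w(x,t)² dx - (u + l'(t)) e^{l(t)-L} w(l(t),t)² + u w(L,t)² + 2 ∫_{l(t)}^{L} e^{x-L} w(x,t) F(x,t) dx. -/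
open MeasureTheory Filter Metric Set intervalIntegral
open scoped Topology

/-- Auxiliary: joint Fréchet differentiability of `(y, s) ↦ ∫ x in y..L, g (x, s)`
when `g` is continuous with continuous partial derivative `gs` in the second variable. -/
lemma aux_joint_fderiv (L : ℝ) (g gs : ℝ × ℝ → ℝ) (hg : Continuous g) (hgs : Continuous gs)
    (hder : ∀ x s : ℝ, HasDerivAt (fun s => g (x, s)) (gs (x, s)) s) (y₀ t₀ : ℝ) :
    HasFDerivAt (fun p : ℝ × ℝ => ∫ x in p.1..L, g (x, p.2))
      ((-g (y₀, t₀)) • ContinuousLinearMap.fst ℝ ℝ ℝ +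
        (∫ x in y₀..L, gs (x, t₀)) • ContinuousLinearMap.snd ℝ ℝ ℝ) (y₀, t₀) := by
  have hxcont : ∀ s : ℝ, Continuous fun x : ℝ => g (x, s) := fun s =>
    hg.comp (continuous_id.prodMk continuous_const)
  have hxcont' : ∀ s : ℝ, Continuous fun x : ℝ => gs (x, s) := fun s =>
    hgs.comp (continuous_id.prodMk continuous_const)
  -- bound for the partial derivative on a compact neighborhood
  obtain ⟨M, hM⟩ : ∃ M, ∀ p ∈ (uIcc y₀ L) ×ˢ (Metric.closedBall t₀ 1), ‖gs p‖ ≤ M :=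
    (isCompact_uIcc.prod (isCompact_closedBall t₀ 1)).exists_bound_of_continuousOn
      hgs.continuousOn
  -- derivative in the parameter, at fixed lower endpoint y₀
  have hA : HasDerivAt (fun s => ∫ x in y₀..L, g (x, s)) (∫ x in y₀..L, gs (x, t₀)) t₀ := by
    have := intervalIntegral.hasDerivAt_integral_of_dominated_loc_of_deriv_le
      (F := fun s x => g (x, s)) (F' := fun s x => gs (x, s)) (x₀ := t₀)
      (a := y₀) (b := L) (bound := fun _ => M) (μ := volume) (Metric.ball_mem_nhds t₀ one_pos)
      (Eventually.of_forall fun s => (hxcont s).aestronglyMeasurable)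
      ((hxcont t₀).intervalIntegrable y₀ L)
      (hxcont' t₀).aestronglyMeasurable
      (ae_of_all _ fun x hx s hs =>
        hM (x, s) ⟨uIoc_subset_uIcc hx, Metric.ball_subset_closedBall hs⟩)
      (intervalIntegrable_const)
      (ae_of_all _ fun x _ s _ => hder x s)
    exact this.2
  refine hasFDerivAt_iff_isLittleO.2 ?_
  rw [Asymptotics.isLittleO_iff]
  intro ε εpos
  have hA' := (Asymptotics.isLittleO_iff.1 (hasDerivAt_iff_isLittleO.1 hA)) (half_pos εpos)
  have hE1 : ∀ᶠ p : ℝ × ℝ in 𝓝 (y₀, t₀),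
      ‖(∫ x in y₀..L, g (x, p.2)) - (∫ x in y₀..L, g (x, t₀)) -
        (p.2 - t₀) • (∫ x in y₀..L, gs (x, t₀))‖ ≤ ε / 2 * ‖p.2 - t₀‖ :=
    (continuous_snd.tendsto (y₀, t₀)).eventually hA'
  obtain ⟨δ, δpos, hδ⟩ := Metric.continuousAt_iff.1 hg.continuousAt (ε / 2) (half_pos εpos)
  filter_upwards [hE1, Metric.ball_mem_nhds (y₀, t₀) δpos] with p h1 h2
  -- split the integral
  have hi1 : IntervalIntegrable (fun x => g (x, p.2)) volume p.1 y₀ :=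
    (hxcont p.2).intervalIntegrable _ _
  have hi2 : IntervalIntegrable (fun x => g (x, p.2)) volume y₀ L :=
    (hxcont p.2).intervalIntegrable _ _
  have hsplit : (∫ x in p.1..L, g (x, p.2)) =
      -(∫ x in y₀..p.1, g (x, p.2)) + ∫ x in y₀..L, g (x, p.2) := by
    rw [← intervalIntegral.integral_symm]
    exact (intervalIntegral.integral_add_adjacent_intervals hi1 hi2).symm
  -- estimate the endpoint part
  have hest : ‖(∫ x in y₀..p.1, g (x, p.2)) - (p.1 - y₀) * g (y₀, t₀)‖ ≤ ε / 2 * ‖p.1 - y₀‖ := by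
    have hconst : (p.1 - y₀) * g (y₀, t₀) = ∫ _ in y₀..p.1, g (y₀, t₀) := by
      rw [intervalIntegral.integral_const, smul_eq_mul]
    rw [hconst, ← intervalIntegral.integral_sub (hi1.symm) (intervalIntegrable_const)]
    have hb : ∀ x ∈ Set.uIoc y₀ p.1, ‖g (x, p.2) - g (y₀, t₀)‖ ≤ ε / 2 := by
      intro x hx
      have hx1 : |x - y₀| ≤ |p.1 - y₀| := by
        rcases Set.mem_uIoc.1 hx with ⟨ha, hb⟩ | ⟨ha, hb⟩
        · rw [abs_of_nonneg (by linarith), abs_of_nonneg (by linarith)]; linarith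
        · rw [abs_of_nonpos (by linarith), abs_of_nonpos (by linarith)]; linarith
      have hdist : dist (x, p.2) (y₀, t₀) < δ := by
        rw [Prod.dist_eq]
        have d1 : dist p.1 y₀ ≤ dist p (y₀, t₀) := by rw [Prod.dist_eq]; exact le_max_left _ _
        have d2 : dist p.2 t₀ ≤ dist p (y₀, t₀) := by rw [Prod.dist_eq]; exact le_max_right _ _
        have hp : dist p (y₀, t₀) < δ := mem_ball.1 h2
        have : dist x y₀ ≤ dist p.1 y₀ := by
          rw [Real.dist_eq, Real.dist_eq]; exact hx1
        exact max_lt (lt_of_le_of_lt (this.trans d1) hp) (lt_of_le_of_lt d2 hp)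
      have := hδ hdist
      rw [Real.dist_eq] at this
      rw [Real.norm_eq_abs]
      exact le_of_lt this
    calc ‖∫ x in y₀..p.1, (g (x, p.2) - g (y₀, t₀))‖
        ≤ ε / 2 * |p.1 - y₀| := intervalIntegral.norm_integral_le_of_norm_le_const hb
      _ = ε / 2 * ‖p.1 - y₀‖ := by rw [Real.norm_eq_abs]
  -- combine
  have hLval : ((-g (y₀, t₀)) • ContinuousLinearMap.fst ℝ ℝ ℝ +
      (∫ x in y₀..L, gs (x, t₀)) • ContinuousLinearMap.snd ℝ ℝ ℝ) (p - (y₀, t₀)) =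
      -g (y₀, t₀) * (p.1 - y₀) + (∫ x in y₀..L, gs (x, t₀)) * (p.2 - t₀) := by
    simp [ContinuousLinearMap.add_apply, ContinuousLinearMap.coe_smul',
      Pi.smul_apply, smul_eq_mul]
  have hkey : (∫ x in p.1..L, g (x, p.2)) - (∫ x in y₀..L, g (x, t₀)) -
      ((-g (y₀, t₀)) • ContinuousLinearMap.fst ℝ ℝ ℝ +
        (∫ x in y₀..L, gs (x, t₀)) • ContinuousLinearMap.snd ℝ ℝ ℝ) (p - (y₀, t₀)) =
      (-((∫ x in y₀..p.1, g (x, p.2)) - (p.1 - y₀) * g (y₀, t₀))) +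
      ((∫ x in y₀..L, g (x, p.2)) - (∫ x in y₀..L, g (x, t₀)) -
        (p.2 - t₀) • (∫ x in y₀..L, gs (x, t₀))) := by
    rw [hLval, hsplit, smul_eq_mul]; ring
  have hn1 : ‖p.1 - y₀‖ ≤ ‖p - (y₀, t₀)‖ := by
    have := norm_fst_le (p - (y₀, t₀)); simpa using this
  have hn2 : ‖p.2 - t₀‖ ≤ ‖p - (y₀, t₀)‖ := by
    have := norm_snd_le (p - (y₀, t₀)); simpa using this
  calc ‖(∫ x in p.1..L, g (x, p.2)) - (∫ x in y₀..L, g (x, t₀)) -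
      ((-g (y₀, t₀)) • ContinuousLinearMap.fst ℝ ℝ ℝ +
        (∫ x in y₀..L, gs (x, t₀)) • ContinuousLinearMap.snd ℝ ℝ ℝ) (p - (y₀, t₀))‖
      = ‖(-((∫ x in y₀..p.1, g (x, p.2)) - (p.1 - y₀) * g (y₀, t₀))) +
        ((∫ x in y₀..L, g (x, p.2)) - (∫ x in y₀..L, g (x, t₀)) -
          (p.2 - t₀) • (∫ x in y₀..L, gs (x, t₀)))‖ := by rw [hkey]
    _ ≤ ‖-((∫ x in y₀..p.1, g (x, p.2)) - (p.1 - y₀) * g (y₀, t₀))‖ +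
        ‖(∫ x in y₀..L, g (x, p.2)) - (∫ x in y₀..L, g (x, t₀)) -
          (p.2 - t₀) • (∫ x in y₀..L, gs (x, t₀))‖ := norm_add_le _ _
    _ ≤ ε / 2 * ‖p.1 - y₀‖ + ε / 2 * ‖p.2 - t₀‖ := by
        rw [norm_neg]; exact add_le_add hest h1
    _ ≤ ε * ‖p - (y₀, t₀)‖ := by
        have h0 : 0 ≤ ε / 2 := le_of_lt (half_pos εpos)
        nlinarith [mul_le_mul_of_nonneg_left hn1 h0, mul_le_mul_of_nonneg_left hn2 h0]

/-- Leibniz rule plus integration by parts for the exponentially weighted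
energy on the moving domain `[l(t), L]` of a solution of the leftward
forced transport equation `∂_t w - u ∂_x w = F`. -/
theorem weighted_energy_derivative_moving_lower_limit
    (u L : ℝ) (hu : 0 < u)
    (l : ℝ → ℝ) (hl : Differentiable ℝ l) (hlL : ∀ t, l t < L)
    (w F : ℝ × ℝ → ℝ) (hw : ContDiff ℝ 1 w)
    (hpde : ∀ x t : ℝ,
      fderiv ℝ w (x, t) ((0 : ℝ), (1 : ℝ)) -
        u * fderiv ℝ w (x, t) ((1 : ℝ), (0 : ℝ)) = F (x, t)) :
    ∀ t : ℝ,
      HasDerivAt (fun s => ∫ x in (l s)..L, Real.exp (x - L) * (w (x, s)) ^ 2)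
        (-u * (∫ x in (l t)..L, Real.exp (x - L) * (w (x, t)) ^ 2)
          - (u + deriv l t) * Real.exp (l t - L) * (w (l t, t)) ^ 2
          + u * (w (L, t)) ^ 2
          + 2 * ∫ x in (l t)..L, Real.exp (x - L) * w (x, t) * F (x, t)) t := by
  intro t
  have hw_cont : Continuous w := hw.continuous
  have hfd : Continuous (fderiv ℝ w) := hw.continuous_fderiv one_ne_zero
  set wx : ℝ × ℝ → ℝ := fun p => fderiv ℝ w p ((1 : ℝ), (0 : ℝ)) with hwx_def
  set wt : ℝ × ℝ → ℝ := fun p => fderiv ℝ w p ((0 : ℝ), (1 : ℝ)) with hwt_def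
  have hwx_cont : Continuous wx := hfd.clm_apply continuous_const
  have hwt_cont : Continuous wt := hfd.clm_apply continuous_const
  have hFeq : ∀ p : ℝ × ℝ, wt p = F p + u * wx p := by
    intro p
    have := hpde p.1 p.2
    have h2 : wt p - u * wx p = F p := by simpa [hwx_def, hwt_def] using this
    linarith
  have hwd : ∀ p : ℝ × ℝ, HasFDerivAt w (fderiv ℝ w p) p := fun p =>
    (hw.differentiable one_ne_zero p).hasFDerivAt
  have hwt_d : ∀ x s : ℝ, HasDerivAt (fun s => w (x, s)) (wt (x, s)) s := by
    intro x s
    have h1 : HasDerivAt (fun s : ℝ => ((x, s) : ℝ × ℝ)) (((0 : ℝ), (1 : ℝ))) s :=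
      (hasDerivAt_const s x).prodMk (hasDerivAt_id s)
    exact (hwd (x, s)).comp_hasDerivAt s h1
  have hwx_d : ∀ x s : ℝ, HasDerivAt (fun x => w (x, s)) (wx (x, s)) x := by
    intro x s
    have h1 : HasDerivAt (fun x : ℝ => ((x, s) : ℝ × ℝ)) (((1 : ℝ), (0 : ℝ))) x :=
      (hasDerivAt_id x).prodMk (hasDerivAt_const x s)
    exact (hwd (x, s)).comp_hasDerivAt x h1
  set g : ℝ × ℝ → ℝ := fun p => Real.exp (p.1 - L) * (w p) ^ 2 with hg_def
  set gs : ℝ × ℝ → ℝ := fun p => Real.exp (p.1 - L) * (2 * w p * wt p) with hgs_def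
  have hg_cont : Continuous g :=
    ((continuous_fst.sub continuous_const).rexp).mul (hw_cont.pow 2)
  have hgs_cont : Continuous gs :=
    ((continuous_fst.sub continuous_const).rexp).mul
      ((continuous_const.mul hw_cont).mul hwt_cont)
  have hder : ∀ x s : ℝ, HasDerivAt (fun s => g (x, s)) (gs (x, s)) s := by
    intro x s
    have h1 := ((hwt_d x s).pow 2).const_mul (Real.exp (x - L))
    simpa [hg_def, hgs_def, mul_comm, mul_assoc, mul_left_comm] using h1
  -- joint derivative and chain rule
  have hG := aux_joint_fderiv L g gs hg_cont hgs_cont hder (l t) t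
  have hc : HasDerivAt (fun s => ((l s, s) : ℝ × ℝ)) ((deriv l t, 1)) t :=
    ((hl t).hasDerivAt).prodMk (hasDerivAt_id t)
  have hφ : HasDerivAt (fun s => ∫ x in (l s)..L, g (x, s))
      (-g (l t, t) * deriv l t + (∫ x in (l t)..L, gs (x, t)) * 1) t := by
    have := HasFDerivAt.comp_hasDerivAt (f := fun s => ((l s, s) : ℝ × ℝ)) t hG hc
    simpa [Function.comp_def, ContinuousLinearMap.add_apply, smul_eq_mul] using this
  -- integrability helpers at time t
  have hxt : Continuous (fun x : ℝ => ((x, t) : ℝ × ℝ)) := continuous_id.prodMk continuous_const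
  have hgx_cont : Continuous fun x : ℝ => g (x, t) := hg_cont.comp hxt
  have hwxx_cont : Continuous fun x : ℝ => Real.exp (x - L) * (2 * w (x, t) * wx (x, t)) :=
    ((continuous_id.sub continuous_const).rexp).mul
      ((continuous_const.mul (hw_cont.comp hxt)).mul (hwx_cont.comp hxt))
  have hwF_cont : Continuous fun x : ℝ => Real.exp (x - L) * w (x, t) * F (x, t) := by
    have hF_cont : Continuous F := by
      have : F = fun p => wt p - u * wx p := by
        funext p; rw [hFeq p]; ring
      rw [this]; exact hwt_cont.sub (continuous_const.mul hwx_cont)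
    exact (((continuous_id.sub continuous_const).rexp).mul (hw_cont.comp hxt)).mul
      (hF_cont.comp hxt)
  -- FTC in x
  have hFTC : ∫ x in (l t)..L, (g (x, t) + Real.exp (x - L) * (2 * w (x, t) * wx (x, t)))
      = g (L, t) - g (l t, t) := by
    apply intervalIntegral.integral_eq_sub_of_hasDerivAt
    · intro x _
      have hexp : HasDerivAt (fun x : ℝ => Real.exp (x - L)) (Real.exp (x - L)) x := by
        simpa using (((hasDerivAt_id x).sub_const L).exp)
      have := hexp.mul ((hwx_d x t).pow 2)
      simpa [hg_def, Pi.mul_def, Pi.pow_def, mul_comm, mul_assoc, mul_left_comm] using this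
    · exact (hgx_cont.add hwxx_cont).intervalIntegrable _ _
  have hsum : ∫ x in (l t)..L, (g (x, t) + Real.exp (x - L) * (2 * w (x, t) * wx (x, t)))
      = (∫ x in (l t)..L, g (x, t)) +
        ∫ x in (l t)..L, Real.exp (x - L) * (2 * w (x, t) * wx (x, t)) :=
    intervalIntegral.integral_add (hgx_cont.intervalIntegrable _ _)
      (hwxx_cont.intervalIntegrable _ _)
  have hIx : (∫ x in (l t)..L, Real.exp (x - L) * (2 * w (x, t) * wx (x, t)))
      = g (L, t) - g (l t, t) - ∫ x in (l t)..L, g (x, t) := by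
    rw [← hFTC, hsum]; ring
  -- rewrite the parameter integral using the PDE
  have hb : (∫ x in (l t)..L, gs (x, t))
      = 2 * (∫ x in (l t)..L, Real.exp (x - L) * w (x, t) * F (x, t)) +
        u * ∫ x in (l t)..L, Real.exp (x - L) * (2 * w (x, t) * wx (x, t)) := by
    have hcongr : ∀ x : ℝ, gs (x, t) =
        2 * (Real.exp (x - L) * w (x, t) * F (x, t)) +
        u * (Real.exp (x - L) * (2 * w (x, t) * wx (x, t))) := by
      intro x
      simp only [hgs_def]
      rw [hFeq (x, t)]
      ring
    rw [intervalIntegral.integral_congr (g := fun x =>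
        2 * (Real.exp (x - L) * w (x, t) * F (x, t)) +
        u * (Real.exp (x - L) * (2 * w (x, t) * wx (x, t)))) (fun x _ => hcongr x)]
    rw [intervalIntegral.integral_add (f := fun x => 2 * (Real.exp (x - L) * w (x, t) * F (x, t)))
      (g := fun x => u * (Real.exp (x - L) * (2 * w (x, t) * wx (x, t))))
      ((continuous_const.mul hwF_cont).intervalIntegrable _ _)
      ((continuous_const.mul hwxx_cont).intervalIntegrable _ _),
      intervalIntegral.integral_const_mul, intervalIntegral.integral_const_mul]
  -- conclude
  have hgl : g (l t, t) = Real.exp (l t - L) * (w (l t, t)) ^ 2 := rfl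
  have hgL : g (L, t) = (w (L, t)) ^ 2 := by
    simp [hg_def, Real.exp_zero]
  convert hφ using 1
  rw [hb, hIx, hgL, hgl]
  ring
end
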